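/- The family F_{(R₀,Ω₀^×)}((Q,q),(π^×,θ^×)) = ( (Ω₀+q)^× Q + (Qπ)^× Q , (Qπ)^×(Ω₀+q) + Qθ ) is a lift of the second order attitude kinematics: the pushforward of F under the differential of φ_{(R₀,Ω₀^×)} at (Q,q) equals f(φ((Q,q),(R₀,Ω₀^×)), (π^×,θ^×)) = ( R₀Q(Qᵀ(Ω₀+q)+π)^× , θ^× ). -/
import Mathlib


open Matrix

noncomputable section

abbrev Mat3 := Matrix (Fin 3) (Fin 3) ℝ
abbrev Vec3 := Fin 3 → ℝ

/-- `Q` is a rotation matrix: orthogonal with determinant 1. -/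
def IsSO3 (Q : Mat3) : Prop := Qᵀ * Q = 1 ∧ Q.det = 1

/-- skew-symmetric matrix `v^×` of a vector. -/
def hat (v : Vec3) : Mat3 := !![0, -v 2, v 1; v 2, 0, -v 0; -v 1, v 0, 0]

/-- inverse of `hat` on skew-symmetric matrices. -/
def vee (W : Mat3) : Vec3 := ![W 2 1, W 0 2, W 1 0]

/-- cross product on ℝ³. -/
def cross (u v : Vec3) : Vec3 :=
  ![u 1 * v 2 - u 2 * v 1, u 2 * v 0 - u 0 * v 2, u 0 * v 1 - u 1 * v 0]

/-- semidirect product on SE(3): (A,a)·(B,b) = (AB, a + Ab). -/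
def semul (X Y : Mat3 × Vec3) : Mat3 × Vec3 := (X.1 * Y.1, X.2 + X.1 *ᵥ Y.2)

lemma hat_add (u v : Vec3) : hat (u + v) = hat u + hat v := by
  ext i j; fin_cases i <;> fin_cases j <;> simp [hat] <;> ring

lemma hat_transpose (v : Vec3) : (hat v)ᵀ = -hat v := by
  ext i j; fin_cases i <;> fin_cases j <;> simp [hat]

lemma hat_mulVec_self (v : Vec3) : hat v *ᵥ v = 0 := by
  funext i; fin_cases i <;>
    simp [hat, Matrix.mulVec, dotProduct, Fin.sum_univ_three] <;> ring

lemma key (A : Mat3) (v : Vec3) : Aᵀ * hat (A *ᵥ v) * A = A.det • hat v := by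
  ext i j; fin_cases i <;> fin_cases j <;>
    simp [hat, Matrix.mul_apply, Matrix.mulVec, dotProduct, Fin.sum_univ_three,
      Matrix.det_fin_three, Matrix.smul_apply] <;> ring

lemma hat_mulVec_SO3 {Q : Mat3} (hQ : IsSO3 Q) (v : Vec3) :
    hat (Q *ᵥ v) = Q * hat v * Qᵀ := by
  have h1 : Q * Qᵀ = 1 := mul_eq_one_comm.mp hQ.1
  have hk := key Q v
  rw [hQ.2, one_smul] at hk
  calc hat (Q *ᵥ v) = (Q * Qᵀ) * hat (Q *ᵥ v) * (Q * Qᵀ) := by rw [h1]; simp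
    _ = Q * (Qᵀ * hat (Q *ᵥ v) * Q) * Qᵀ := by noncomm_ring
    _ = Q * hat v * Qᵀ := by rw [hk]

/-- the family F is a lift of the second order attitude kinematics. -/
theorem system_lift (R₀ Q : Mat3) (Ω₀ q π θ : Vec3)
    (hR₀ : IsSO3 R₀) (hQ : IsSO3 Q) :
    R₀ * (hat (Ω₀ + q) * Q + hat (Q *ᵥ π) * Q)
      = R₀ * Q * hat (Qᵀ *ᵥ (Ω₀ + q) + π) ∧
    hat ((hat (Ω₀ + q) * Q + hat (Q *ᵥ π) * Q)ᵀ *ᵥ (Ω₀ + q)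
        + Qᵀ *ᵥ (hat (Q *ᵥ π) *ᵥ (Ω₀ + q) + Q *ᵥ θ))
      = hat θ := by
  have h1 : Q * Qᵀ = 1 := mul_eq_one_comm.mp hQ.1
  have hQT : IsSO3 Qᵀ := ⟨by rwa [Matrix.transpose_transpose], by rw [Matrix.det_transpose]; exact hQ.2⟩
  obtain ⟨w, hw⟩ : ∃ w, Ω₀ + q = w := ⟨_, rfl⟩
  rw [hw]
  constructor
  · rw [hat_add, hat_mulVec_SO3 hQT, hat_mulVec_SO3 hQ, Matrix.transpose_transpose]
    rw [Matrix.mul_add, Matrix.mul_add]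
    congr 1
    · calc R₀ * (hat w * Q) = R₀ * (Q * Qᵀ * hat w * Q) := by rw [h1]; noncomm_ring
        _ = R₀ * Q * (Qᵀ * hat w * Q) := by noncomm_ring
    · calc R₀ * (Q * hat π * Qᵀ * Q) = R₀ * Q * (hat π * (Qᵀ * Q)) := by noncomm_ring
        _ = R₀ * Q * hat π := by rw [hQ.1, Matrix.mul_one]
  · have harg : (hat w * Q + hat (Q *ᵥ π) * Q)ᵀ *ᵥ w
        + Qᵀ *ᵥ (hat (Q *ᵥ π) *ᵥ w + Q *ᵥ θ) = θ := by
      rw [Matrix.transpose_add, Matrix.transpose_mul, Matrix.transpose_mul,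
        hat_transpose, hat_transpose, Matrix.add_mulVec, Matrix.mulVec_add]
      simp only [Matrix.mul_neg, Matrix.neg_mulVec, ← Matrix.mulVec_mulVec,
        hat_mulVec_self, Matrix.mulVec_zero, neg_zero, zero_add]
      have hθ : Qᵀ *ᵥ (Q *ᵥ θ) = θ := by
        rw [Matrix.mulVec_mulVec, hQ.1, Matrix.one_mulVec]
      rw [hθ]
      abel
    rw [harg]
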